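/- Let a ∈ (-1,1) and let φ : (0,∞) → ℝ solve -φ(y) + (a/y)·φ'(y) + φ''(y) = 0 with φ(0⁺)=1, φ(∞)=0 and all relevant integrals finite. Define d₁ = ∫₀^∞ t^{a+2}(φ(t)² + φ'(t)²) dt and d₃ = ∫₀^∞ t^a φ(t)² dt. Then d₁ = (a+1)·d₃. -/

import Mathlib

open Set Filter MeasureTheory

private lemma limit_zero_aux {g h : ℝ → ℝ} {L : ℝ}
    (hg : IntegrableOn g (Set.Ioi (0:ℝ)))
    (hb : ∀ t ∈ Set.Ioi (0:ℝ), |h t| ≤ g t)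
    (hL : Tendsto h atTop (nhds L)) : L = 0 := by
  by_contra hne
  have habs : Tendsto (fun t => |h t|) atTop (nhds |L|) := hL.abs
  have hlt : |L| / 2 < |L| := half_lt_self (abs_pos.2 hne)
  have hev : ∀ᶠ t in atTop, |L| / 2 < |h t| := habs.eventually (eventually_gt_nhds hlt)
  rw [eventually_atTop] at hev
  obtain ⟨T, hT⟩ := hev
  set T' := max T 1 with hT'def
  have hT'pos : (0:ℝ) < T' := lt_of_lt_of_le one_pos (le_max_right _ _)
  have hconst : IntegrableOn (fun _ : ℝ => |L| / 2) (Set.Ioi T') := by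
    apply Integrable.mono' (hg.mono_set (Set.Ioi_subset_Ioi hT'pos.le))
      aestronglyMeasurable_const
    filter_upwards [ae_restrict_mem measurableSet_Ioi] with t ht
    have ht0 : t ∈ Set.Ioi (0:ℝ) := lt_trans hT'pos ht
    have h1 := hb t ht0
    have h2 := hT t (le_of_lt (lt_of_le_of_lt (le_max_left T 1) ht))
    have hnorm : ‖|L| / 2‖ = |L| / 2 := by
      rw [Real.norm_eq_abs, abs_of_nonneg (by positivity)]
    rw [hnorm]
    linarith
  rw [integrableOn_const_iff] at hconst
  rcases hconst with h | h
  · exact hne (by simpa using h)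
  · simp [Real.volume_Ioi] at h

private lemma cwa_Ici_of_tendsto {f : ℝ → ℝ} {c : ℝ} (h1 : f 0 = c)
    (h2 : Tendsto f (nhdsWithin 0 (Set.Ioi 0)) (nhds c)) :
    ContinuousWithinAt f (Set.Ici 0) 0 := by
  rw [ContinuousWithinAt, h1, ← Set.Ioi_insert, nhdsWithin_insert, Filter.tendsto_sup]
  exact ⟨by rw [← h1]; exact tendsto_pure_nhds f 0, h2⟩

private lemma tendsto_atTop_of_deriv_integrable {f f' : ℝ → ℝ}
    (hderiv : ∀ x ∈ Set.Ioi (0:ℝ), HasDerivAt f (f' x) x)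
    (hint : IntegrableOn f' (Set.Ioi (0:ℝ))) :
    ∃ L, Tendsto f atTop (nhds L) := by
  refine ⟨f 1 + ∫ s in Set.Ioi (1:ℝ), f' s, ?_⟩
  have hsub : Set.Ioi (1:ℝ) ⊆ Set.Ioi 0 := Set.Ioi_subset_Ioi one_pos.le
  have h1 : Tendsto (fun t => ∫ s in (1:ℝ)..t, f' s) atTop
      (nhds (∫ s in Set.Ioi (1:ℝ), f' s)) :=
    intervalIntegral_tendsto_integral_Ioi 1 (hint.mono_set hsub) tendsto_id
  have h2 : ∀ᶠ t in atTop, f 1 + ∫ s in (1:ℝ)..t, f' s = f t := by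
    filter_upwards [eventually_ge_atTop (1:ℝ)] with t ht
    have heq : ∫ s in (1:ℝ)..t, f' s = f t - f 1 := by
      apply intervalIntegral.integral_eq_sub_of_hasDerivAt
      · intro x hx
        rw [Set.uIcc_of_le ht] at hx
        exact hderiv x (lt_of_lt_of_le one_pos hx.1)
      · apply MeasureTheory.IntegrableOn.intervalIntegrable
        apply hint.mono_set
        rw [Set.uIcc_of_le ht]
        intro x hx
        exact lt_of_lt_of_le one_pos hx.1
    rw [heq]; ring
  exact Tendsto.congr' h2 (tendsto_const_nhds.add h1)

/-- For the Caffarelli–Silvestre profile `φ`,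
`d₁ = ∫ t^{a+2}(φ² + (φ')²) = (a+1)·∫ t^a φ² = (a+1)·d₃`. -/
theorem stmt1 (a : ℝ) (ha : a ∈ Set.Ioo (-1 : ℝ) 1)
    (φ : ℝ → ℝ) (hφ : ContDiffOn ℝ 2 φ (Set.Ioi 0))
    (hODE : ∀ y ∈ Set.Ioi (0 : ℝ),
      -φ y + (a / y) * deriv φ y + deriv (deriv φ) y = 0)
    (h0 : Tendsto φ (nhdsWithin 0 (Set.Ioi 0)) (nhds 1))
    (hinf : Tendsto φ atTop (nhds 0))
    (hi1 : IntegrableOn (fun t => t ^ (a + 2) * ((φ t) ^ 2 + (deriv φ t) ^ 2)) (Set.Ioi 0))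
    (hi2 : IntegrableOn (fun t => t ^ a * (φ t) ^ 2) (Set.Ioi 0))
    (hi3 : IntegrableOn (fun t => t ^ (a + 1) * φ t * deriv φ t) (Set.Ioi 0))
    (hb1 : Tendsto (fun t => t ^ (a + 1) * φ t * deriv φ t) (nhdsWithin 0 (Set.Ioi 0)) (nhds 0))
    (hb2 : Tendsto (fun t => t ^ (a + 1) * φ t * deriv φ t) atTop (nhds 0)) :
    ∫ t in Set.Ioi (0 : ℝ), t ^ (a + 2) * ((φ t) ^ 2 + (deriv φ t) ^ 2)
      = (a + 1) * ∫ t in Set.Ioi (0 : ℝ), t ^ a * (φ t) ^ 2 := by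
  obtain ⟨ha1, ha2⟩ := ha
  have ha1' : (0:ℝ) < a + 1 := by linarith
  -- derivatives of φ
  have hφd : ∀ t ∈ Set.Ioi (0:ℝ), HasDerivAt φ (deriv φ t) t := by
    intro t ht
    exact ((hφ.differentiableOn (by norm_num)).differentiableAt
      (isOpen_Ioi.mem_nhds ht)).hasDerivAt
  have hφd2 : ∀ t ∈ Set.Ioi (0:ℝ), HasDerivAt (deriv φ) (deriv (deriv φ) t) t := by
    intro t ht
    have h1 : ContDiffOn ℝ 1 (deriv φ) (Set.Ioi 0) :=
      hφ.deriv_of_isOpen isOpen_Ioi (by norm_num)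
    exact ((h1.differentiableOn (by norm_num)).differentiableAt
      (isOpen_Ioi.mem_nhds ht)).hasDerivAt
  have hODE' : ∀ t ∈ Set.Ioi (0:ℝ), deriv (deriv φ) t = φ t - (a / t) * deriv φ t := by
    intro t ht
    have := hODE t ht
    linarith
  -- derivative of u = t^{a+1} φ²
  have hu' : ∀ t ∈ Set.Ioi (0:ℝ), HasDerivAt (fun t => t ^ (a+1) * (φ t)^2)
      ((a+1) * (t ^ a * (φ t)^2) + 2 * (t ^ (a+1) * φ t * deriv φ t)) t := by
    intro t ht
    have ht0 : (0:ℝ) < t := ht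
    have h1 : HasDerivAt (fun x : ℝ => x ^ (a+1)) ((a+1) * t ^ (a+1-1)) t :=
      Real.hasDerivAt_rpow_const (Or.inl (ne_of_gt ht0))
    have h2 : HasDerivAt (fun x => (φ x)^2) (2 * φ t * deriv φ t) t := by
      have := (hφd t ht).fun_pow 2
      simpa using this
    refine (h1.mul h2).congr_deriv ?_
    rw [show a + 1 - 1 = a from by ring]
    ring
  -- derivative of v = t^{a+2} φ φ'
  have hv' : ∀ t ∈ Set.Ioi (0:ℝ), HasDerivAt (fun t => t ^ (a+2) * φ t * deriv φ t)
      (t ^ (a+2) * ((φ t)^2 + (deriv φ t)^2) + 2 * (t ^ (a+1) * φ t * deriv φ t)) t := by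
    intro t ht
    have ht0 : (0:ℝ) < t := ht
    have h1 : HasDerivAt (fun x : ℝ => x ^ (a+2)) ((a+2) * t ^ (a+2-1)) t :=
      Real.hasDerivAt_rpow_const (Or.inl (ne_of_gt ht0))
    refine ((h1.mul (hφd t ht)).mul (hφd2 t ht)).congr_deriv ?_
    have hsplit : t ^ (a+2) = t ^ (a+1) * t := by
      rw [show a + 2 = (a+1) + 1 from by ring, Real.rpow_add ht0, Real.rpow_one]
    simp only [Pi.mul_apply]
    rw [show a + 2 - 1 = a + 1 from by ring, hODE' t ht, hsplit]
    field_simp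
    ring
  -- integrability of the derivatives
  have hu'int : IntegrableOn
      (fun t => (a+1) * (t ^ a * (φ t)^2) + 2 * (t ^ (a+1) * φ t * deriv φ t))
      (Set.Ioi (0:ℝ)) := (hi2.const_mul (a+1)).add (hi3.const_mul 2)
  have hv'int : IntegrableOn
      (fun t => t ^ (a+2) * ((φ t)^2 + (deriv φ t)^2) + 2 * (t ^ (a+1) * φ t * deriv φ t))
      (Set.Ioi (0:ℝ)) := hi1.add (hi3.const_mul 2)
  -- a common integrable dominating function
  have hgint : IntegrableOn
      (fun t => (t ^ (a+2) * ((φ t)^2 + (deriv φ t)^2) + t ^ a * (φ t)^2) / 2)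
      (Set.Ioi (0:ℝ)) := (hi1.add hi2).div_const 2
  have hubound : ∀ t ∈ Set.Ioi (0:ℝ), |t ^ (a+1) * (φ t)^2| ≤
      (t ^ (a+2) * ((φ t)^2 + (deriv φ t)^2) + t ^ a * (φ t)^2) / 2 := by
    intro t ht
    have ht0 : (0:ℝ) < t := ht
    have e1 : t ^ (a+1) = t ^ a * t := by rw [Real.rpow_add ht0, Real.rpow_one]
    have e2 : t ^ (a+2) = t ^ a * t^2 := by
      rw [show a + 2 = a + (2:ℝ) from rfl, Real.rpow_add ht0, Real.rpow_two]
    have hA : (0:ℝ) < t ^ a := Real.rpow_pos_of_pos ht0 a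
    rw [e1, e2, abs_of_nonneg (by positivity)]
    nlinarith [mul_nonneg (mul_nonneg hA.le (sq_nonneg (t - 1))) (sq_nonneg (φ t)),
      mul_nonneg (mul_nonneg hA.le (sq_nonneg t)) (sq_nonneg (deriv φ t))]
  have hvbound : ∀ t ∈ Set.Ioi (0:ℝ), |t ^ (a+2) * φ t * deriv φ t| ≤
      (t ^ (a+2) * ((φ t)^2 + (deriv φ t)^2) + t ^ a * (φ t)^2) / 2 := by
    intro t ht
    have ht0 : (0:ℝ) < t := ht
    have hA2 : (0:ℝ) < t ^ (a+2) := Real.rpow_pos_of_pos ht0 (a+2)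
    have hA : (0:ℝ) < t ^ a := Real.rpow_pos_of_pos ht0 a
    rw [abs_le]
    constructor <;>
      nlinarith [mul_nonneg hA2.le (sq_nonneg (φ t + deriv φ t)),
        mul_nonneg hA2.le (sq_nonneg (φ t - deriv φ t)),
        mul_nonneg hA.le (sq_nonneg (φ t))]
  -- limits at infinity are zero
  obtain ⟨Lu, hLu⟩ := tendsto_atTop_of_deriv_integrable hu' hu'int
  obtain ⟨Lv, hLv⟩ := tendsto_atTop_of_deriv_integrable hv' hv'int
  have hLu0 : Lu = 0 := limit_zero_aux hgint hubound hLu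
  have hLv0 : Lv = 0 := limit_zero_aux hgint hvbound hLv
  -- continuity at 0 (values 0)
  have hu0 : ContinuousWithinAt (fun t => t ^ (a+1) * (φ t)^2) (Set.Ici 0) 0 := by
    apply cwa_Ici_of_tendsto (c := 0)
    · simp [Real.zero_rpow (ne_of_gt ha1')]
    · have h1 : Tendsto (fun t : ℝ => t ^ (a+1)) (nhdsWithin 0 (Set.Ioi 0)) (nhds 0) := by
        have hc : ContinuousAt (fun t : ℝ => t ^ (a+1)) 0 :=
          Real.continuousAt_rpow_const 0 (a+1) (Or.inr ha1'.le)
        have h0' := hc.tendsto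
        rw [Real.zero_rpow (ne_of_gt ha1')] at h0'
        exact h0'.mono_left nhdsWithin_le_nhds
      have h2 : Tendsto (fun t => (φ t)^2) (nhdsWithin 0 (Set.Ioi 0)) (nhds 1) := by
        have := h0.pow 2
        norm_num at this
        exact this
      simpa using h1.mul h2
  have hv0 : ContinuousWithinAt (fun t => t ^ (a+2) * φ t * deriv φ t) (Set.Ici 0) 0 := by
    apply cwa_Ici_of_tendsto (c := 0)
    · simp [Real.zero_rpow (by linarith : a + 2 ≠ 0)]
    · have heq : (fun t : ℝ => t * (t ^ (a+1) * φ t * deriv φ t))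
          =ᶠ[nhdsWithin 0 (Set.Ioi 0)] (fun t => t ^ (a+2) * φ t * deriv φ t) := by
        filter_upwards [self_mem_nhdsWithin] with t ht
        have e : t ^ (a+2) = t * t ^ (a+1) := by
          rw [show a + 2 = 1 + (a+1) from by ring, Real.rpow_add ht, Real.rpow_one]
        rw [e]
        ring
      have hid : Tendsto (fun t : ℝ => t) (nhdsWithin 0 (Set.Ioi 0)) (nhds 0) :=
        (continuous_id.tendsto 0).mono_left nhdsWithin_le_nhds
      have h1 := hid.mul hb1
      rw [zero_mul] at h1
      exact Tendsto.congr' heq h1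
  -- FTC on (0, ∞)
  have hIu := integral_Ioi_of_hasDerivAt_of_tendsto hu0 hu' hu'int hLu
  have hIv := integral_Ioi_of_hasDerivAt_of_tendsto hv0 hv' hv'int hLv
  rw [hLu0] at hIu
  rw [hLv0] at hIv
  simp only [Real.zero_rpow (ne_of_gt ha1'), zero_mul, mul_zero, sub_zero, zero_sub,
    neg_zero] at hIu
  simp only [Real.zero_rpow (by linarith : a + 2 ≠ 0), zero_mul, mul_zero, sub_zero,
    zero_sub, neg_zero] at hIv
  rw [integral_add (hi2.const_mul (a+1)) (hi3.const_mul 2), integral_const_mul,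
    integral_const_mul] at hIu
  rw [integral_add hi1 (hi3.const_mul 2), integral_const_mul] at hIv
  linarith
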